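/- For every integer m > 1 and every point p = (x₁, x₂, y) with e_m(p) = 0, the gradient of e_m at p is a scalar multiple of the first standard coordinate vector (equivalently, all partial derivatives of e_m at p in the x₂-direction and all y-directions vanish) if and only if either (y = 0, x₁ = c₁₀(x₂) and deriv c₁₀ (x₂) = 0), or p = (1, 0, 0). (These are precisely the critical points of the restriction of the first-coordinate projection to the hypersurface e_m⁻¹(0).) -/

import Mathlib

noncomputable def c10 (x : ℝ) : ℝ := (Real.sin x) ^ 2 / (2 * (x ^ 2 + 1))

noncomputable def c20 (x : ℝ) : ℝ := 1 / (x ^ 2 + 1)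

noncomputable def e (m : ℕ) : ℝ × ℝ × (Fin (m - 1) → ℝ) → ℝ :=
  fun p => (p.1 - c10 p.2.1) * (c20 p.2.1 - p.1) - ∑ j, (p.2.2 j) ^ 2

lemma c10_diff (x : ℝ) : DifferentiableAt ℝ c10 x := by
  unfold c10
  exact ((Real.differentiable_sin x).pow 2).div (by fun_prop) (by positivity)

lemma c20_hasDeriv (x : ℝ) : HasDerivAt c20 (-(2*x) / (x^2+1)^2) x := by
  have h : HasDerivAt (fun x : ℝ => x^2+1) (2*x) x := by
    simpa using (hasDerivAt_pow 2 x).add_const 1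
  have h2 := (hasDerivAt_const x (1:ℝ)).div h (by positivity)
  have e2 : (0 * (x ^ 2 + 1) - 1 * (2 * x)) / (x ^ 2 + 1) ^ 2 = -(2*x)/(x^2+1)^2 := by ring
  rw [e2] at h2
  exact h2

lemma c20_sub_c10_ne (x : ℝ) : c20 x - c10 x ≠ 0 := by
  have h1 : (Real.sin x)^2 ≤ 1 := Real.sin_sq_le_one x
  have h3 : c20 x - c10 x = (2 - (Real.sin x)^2) / (2*(x^2+1)) := by
    unfold c20 c10; field_simp
  rw [h3]
  exact (div_pos (by linarith) (by positivity)).ne'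

open ContinuousLinearMap in
lemma fderiv_vals (m : ℕ) (p : ℝ × ℝ × (Fin (m - 1) → ℝ)) :
    fderiv ℝ (e m) p ((0 : ℝ), (1 : ℝ), (0 : Fin (m - 1) → ℝ))
      = -(deriv c10 p.2.1) * (c20 p.2.1 - p.1) + (p.1 - c10 p.2.1) * (-(2*p.2.1) / (p.2.1^2+1)^2)
    ∧ ∀ j, fderiv ℝ (e m) p ((0 : ℝ), (0 : ℝ), Pi.single j (1 : ℝ)) = -(2 * p.2.2 j) := by
  have hf1 : HasFDerivAt (fun q : ℝ × ℝ × (Fin (m-1) → ℝ) => q.1)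
      (fst ℝ ℝ (ℝ × (Fin (m-1) → ℝ))) p := hasFDerivAt_fst
  have hf2 : HasFDerivAt (fun q : ℝ × ℝ × (Fin (m-1) → ℝ) => q.2.1)
      ((fst ℝ ℝ (Fin (m-1) → ℝ)).comp (snd ℝ ℝ (ℝ × (Fin (m-1) → ℝ)))) p :=
    hasFDerivAt_fst.comp p hasFDerivAt_snd
  have h10 := ((c10_diff p.2.1).hasDerivAt).comp_hasFDerivAt p hf2
  have h20 := (c20_hasDeriv p.2.1).comp_hasFDerivAt p hf2
  have hyj : ∀ j : Fin (m-1), HasFDerivAt (fun q : ℝ × ℝ × (Fin (m-1) → ℝ) => (q.2.2 j)^2)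
      ((2 * p.2.2 j) • ((proj j).comp ((snd ℝ ℝ (Fin (m-1) → ℝ)).comp
        (snd ℝ ℝ (ℝ × (Fin (m-1) → ℝ)))))) p := by
    intro j
    have hinner : HasFDerivAt (fun q : ℝ × ℝ × (Fin (m-1) → ℝ) => q.2.2 j)
        ((proj j).comp ((snd ℝ ℝ (Fin (m-1) → ℝ)).comp (snd ℝ ℝ (ℝ × (Fin (m-1) → ℝ))))) p :=
      ((proj j).comp ((snd ℝ ℝ (Fin (m-1) → ℝ)).comp
        (snd ℝ ℝ (ℝ × (Fin (m-1) → ℝ))))).hasFDerivAt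
    have houter : HasDerivAt (fun t : ℝ => t^2) (2 * p.2.2 j) (p.2.2 j) := by
      simpa using hasDerivAt_pow 2 (p.2.2 j)
    exact houter.comp_hasFDerivAt p hinner
  have hsum := HasFDerivAt.fun_sum (fun j (_ : j ∈ Finset.univ) => hyj j)
  have H : HasFDerivAt (e m) _ p := ((hf1.sub h10).mul (h20.sub hf1)).sub hsum
  rw [H.fderiv]
  constructor
  · simp
    ring
  · intro j
    simp [Pi.single_apply]

theorem stmt7 (m : ℕ) (hm : 1 < m) (p : ℝ × ℝ × (Fin (m - 1) → ℝ))
    (hp : e m p = 0) :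
    (fderiv ℝ (e m) p ((0 : ℝ), (1 : ℝ), (0 : Fin (m - 1) → ℝ)) = 0 ∧
      ∀ j : Fin (m - 1),
        fderiv ℝ (e m) p ((0 : ℝ), (0 : ℝ), Pi.single j (1 : ℝ)) = 0) ↔
    ((p.2.2 = 0 ∧ p.1 = c10 p.2.1 ∧ deriv c10 p.2.1 = 0) ∨
      p = ((1 : ℝ), (0 : ℝ), (0 : Fin (m - 1) → ℝ))) := by
  obtain ⟨hv1, hv2⟩ := fderiv_vals m p
  rw [hv1]
  simp only [hv2]
  set x₁ := p.1 with hx₁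
  set x₂ := p.2.1 with hx₂
  set y := p.2.2 with hy
  constructor
  · rintro ⟨hd2, hdy⟩
    have hy0 : y = 0 := by
      funext j
      have := hdy j
      simpa using by linarith [hdy j]
    have hsum0 : ∑ j, (y j)^2 = 0 := by rw [hy0]; simp
    have hprod : (x₁ - c10 x₂) * (c20 x₂ - x₁) = 0 := by
      have := hp
      unfold e at this
      rw [← hx₁, ← hx₂, ← hy, hsum0] at this
      linarith
    rcases mul_eq_zero.1 hprod with h | h
    · -- x₁ = c10 x₂
      have hx : x₁ = c10 x₂ := by linarith [sub_eq_zero.1 h]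
      left
      refine ⟨hy0, hx, ?_⟩
      have : -(deriv c10 x₂) * (c20 x₂ - c10 x₂) = 0 := by
        rw [hx] at hd2
        have : (c10 x₂ - c10 x₂) * (-(2*x₂) / (x₂^2+1)^2) = 0 := by ring_nf
        linarith [hd2]
      rcases mul_eq_zero.1 this with h' | h'
      · linarith
      · exact absurd h' (c20_sub_c10_ne x₂)
    · -- x₁ = c20 x₂
      have hx : x₁ = c20 x₂ := by linarith [sub_eq_zero.1 h]
      have hz : (x₁ - c10 x₂) * (-(2*x₂) / (x₂^2+1)^2) = 0 := by
        have : -(deriv c10 x₂) * (c20 x₂ - x₁) = 0 := by rw [hx]; ring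
        linarith
      have hden : (0:ℝ) < (x₂^2+1)^2 := by positivity
      have hx2 : x₂ = 0 := by
        rcases mul_eq_zero.1 hz with h' | h'
        · exfalso
          have : c20 x₂ - c10 x₂ = 0 := by rw [← hx]; linarith
          exact c20_sub_c10_ne x₂ this
        · have := (div_eq_zero_iff.1 h')
          rcases this with h'' | h''
          · linarith
          · exact absurd h'' hden.ne'
      right
      have hc20 : c20 (0:ℝ) = 1 := by norm_num [c20]
      have : x₁ = 1 := by rw [hx, hx2, hc20]
      exact Prod.ext this (Prod.ext hx2 hy0)
  · rintro (⟨hy0, hx, hd⟩ | hrfl)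
    · constructor
      · rw [hd, ← hx]
        ring
      · intro j; rw [hy0]; simp
    · have h1 : x₁ = 1 := by rw [hx₁, hrfl]
      have h2 : x₂ = 0 := by rw [hx₂, hrfl]
      have h3 : y = 0 := by rw [hy, hrfl]
      constructor
      · rw [h1, h2]
        norm_num [c20]
      · intro j; rw [h3]; simp
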